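/- For every ν with 0 < ν < 1 there exists a unique μᵗ(ν) > −1 such that ω(k₊(ν); μᵗ(ν), ν) = 0, i.e., such that −2(1 + μᵗ + √(1+μᵗ)) + G(k₊(ν);ν) = 0; moreover ω(k; μᵗ(ν), ν) < 0 for every real k with |k| ≠ k₊(ν). (Thus u⁺ undergoes a Turing bifurcation with critical wave number k₊(ν) at μ = μᵗ(ν).) -/
import Mathlib


/-- F_u(u;μ) = μ + 4u − 3u². -/
noncomputable def Fu (u μ : ℝ) : ℝ := μ + 4 * u - 3 * u ^ 2

/-- u⁺(μ) = 1 + √(1+μ). -/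
noncomputable def uplus (μ : ℝ) : ℝ := 1 + Real.sqrt (1 + μ)

/-- G(k;ν) = −νk² + 2k⁴ − k⁶. -/
noncomputable def G (k ν : ℝ) : ℝ := -ν * k ^ 2 + 2 * k ^ 4 - k ^ 6

/-- Dispersion relation ω(k;μ,ν) = F_u(u⁺(μ);μ) + G(k;ν). -/
noncomputable def omega (k μ ν : ℝ) : ℝ := Fu (uplus μ) μ + G k ν

/-- k₊(ν) = √((4+√(16−12ν))/6). -/
noncomputable def kplus (ν : ℝ) : ℝ := Real.sqrt ((4 + Real.sqrt (16 - 12 * ν)) / 6)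

set_option maxHeartbeats 1000000 in
/-- for every 0 < ν < 1 there is a unique μᵗ(ν) > −1 with
ω(k₊(ν);μᵗ,ν) = 0, i.e. −2(1 + μᵗ + √(1+μᵗ)) + G(k₊(ν);ν) = 0; moreover for
this μᵗ one has ω(k;μᵗ,ν) < 0 for all k with |k| ≠ k₊(ν). -/
theorem turing_bifurcation_exists_unique (ν : ℝ) (h0 : 0 < ν) (h1 : ν < 1) :
    (∃! μ : ℝ, -1 < μ ∧
        -2 * (1 + μ + Real.sqrt (1 + μ)) + G (kplus ν) ν = 0) ∧
    (∀ μ : ℝ, -1 < μ → omega (kplus ν) μ ν = 0 →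
      ∀ k : ℝ, |k| ≠ kplus ν → omega k μ ν < 0) := by
  set s : ℝ := Real.sqrt (16 - 12 * ν) with hs_def
  have hs0 : (0:ℝ) ≤ s := Real.sqrt_nonneg _
  have hs2 : s ^ 2 = 16 - 12 * ν := Real.sq_sqrt (by linarith)
  have hsgt : 2 < s := by nlinarith
  set x : ℝ := (4 + s) / 6 with hx_def
  have hx1 : 1 < x := by
    rw [hx_def]; linarith
  have hxnn : (0:ℝ) ≤ x := by linarith
  have hk2 : (kplus ν) ^ 2 = x := by
    rw [kplus, ← hs_def, ← hx_def, Real.sq_sqrt hxnn]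
  have hν : ν = 4 * x - 3 * x ^ 2 := by
    rw [hx_def]; linear_combination (1/12 : ℝ) * hs2
  have hGk : G (kplus ν) ν = 2 * x ^ 3 - 2 * x ^ 2 := by
    have h4 : (kplus ν) ^ 4 = x ^ 2 := by rw [show (4:ℕ) = 2*2 from rfl, pow_mul, hk2]
    have h6 : (kplus ν) ^ 6 = x ^ 3 := by rw [show (6:ℕ) = 2*3 from rfl, pow_mul, hk2]
    rw [G, hk2, h4, h6, hν]; ring
  constructor
  · -- existence and uniqueness
    have hcpos : 0 < x ^ 3 - x ^ 2 := by nlinarith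
    set r : ℝ := Real.sqrt (1 + 4 * (x ^ 3 - x ^ 2)) with hr_def
    have hr0 : (0:ℝ) ≤ r := Real.sqrt_nonneg _
    have hr2 : r ^ 2 = 1 + 4 * (x ^ 3 - x ^ 2) := Real.sq_sqrt (by linarith)
    have hr1 : 1 < r := by nlinarith
    set t : ℝ := (-1 + r) / 2 with ht_def
    have htpos : 0 < t := by rw [ht_def]; linarith
    have htt : t ^ 2 + t = x ^ 3 - x ^ 2 := by
      rw [ht_def]; linear_combination (1/4 : ℝ) * hr2
    have hsq : Real.sqrt (1 + (t ^ 2 - 1)) = t := by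
      rw [show 1 + (t ^ 2 - 1) = t ^ 2 by ring, Real.sqrt_sq htpos.le]
    refine ⟨t ^ 2 - 1, ⟨by nlinarith, ?_⟩, ?_⟩
    · rw [hsq, hGk]; linarith
    · rintro y ⟨hy1, hy2⟩
      rw [hGk] at hy2
      set a : ℝ := Real.sqrt (1 + y) with ha_def
      have ha0 : 0 ≤ a := Real.sqrt_nonneg _
      have ha2 : a ^ 2 = 1 + y := Real.sq_sqrt (by linarith)
      have key : (a - t) * (a + t + 1) = 0 := by
        linear_combination ha2 - (1/2 : ℝ) * hy2 - htt
      rcases mul_eq_zero.mp key with h | h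
      · have hat : a = t := by linarith
        have : 1 + y = t ^ 2 := by rw [← ha2, hat]
        linarith
      · linarith
  · -- negativity away from k₊
    intro μ hμ hω k hk
    have hωk : Fu (uplus μ) μ + G (kplus ν) ν = 0 := hω
    rw [hGk] at hωk
    have hxne : k ^ 2 ≠ x := by
      intro h
      apply hk
      rw [← Real.sqrt_sq_eq_abs, h, ← hk2,
        Real.sqrt_sq (show (0:ℝ) ≤ kplus ν from Real.sqrt_nonneg _)]
    have h2 : 0 < (k ^ 2 - x) ^ 2 :=
      lt_of_le_of_ne (sq_nonneg _) (Ne.symm (pow_ne_zero 2 (sub_ne_zero.mpr hxne)))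
    have key : 0 < (k ^ 2 - x) ^ 2 * (k ^ 2 + 2 * x - 2) :=
      mul_pos h2 (by nlinarith [sq_nonneg k])
    have hid : Fu (uplus μ) μ + (-ν * k ^ 2 + 2 * k ^ 4 - k ^ 6)
        = -((k ^ 2 - x) ^ 2 * (k ^ 2 + 2 * x - 2)) := by
      linear_combination hωk - k ^ 2 * hν
    rw [omega, G, hid]
    linarith
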